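/- Finite-horizon L₂-gain bound (part of Lemma 1): let X ⊆ ℝⁿ, let V : ℝⁿ → ℝ be continuously differentiable, nonnegative on X, and satisfy the HJI equation at every point of X. Let f, g, k, h be continuous, let T > 0, let w : ℝ → ℝ^q be continuous, and let x : ℝ → ℝⁿ be differentiable on [0, T] with x(t) ∈ X and x'(t) = f(x(t)) + g(x(t))·u_V(x(t)) + k(x(t))·w(t) for all t ∈ [0, T], and suppose V(x(0)) = 0. Then ∫₀ᵀ (‖h(x(t))‖² + ⟨u_V(x(t)), R·u_V(x(t))⟩) dt ≤ γ² · ∫₀ᵀ ‖w(t)‖² dt. -/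

import Mathlib

open Matrix

/-- Matrix–vector multiplication, valued in Euclidean space. -/
noncomputable def mv {a b : ℕ} (M : Matrix (Fin a) (Fin b) ℝ)
    (v : EuclideanSpace ℝ (Fin b)) : EuclideanSpace ℝ (Fin a) :=
  WithLp.toLp 2 (M.mulVec v)

/-- The control policy `u_V(x) = -(1/2) R⁻¹ g(x)ᵀ ∇V(x)`. -/
noncomputable def uPol {n m : ℕ}
    (g : EuclideanSpace ℝ (Fin n) → Matrix (Fin n) (Fin m) ℝ)
    (R : Matrix (Fin m) (Fin m) ℝ)
    (V : EuclideanSpace ℝ (Fin n) → ℝ)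
    (x : EuclideanSpace ℝ (Fin n)) : EuclideanSpace ℝ (Fin m) :=
  (-(1/2 : ℝ)) • mv R⁻¹ (mv (g x)ᵀ (gradient V x))

/-- The disturbance policy `w_V(x) = (1/(2γ²)) k(x)ᵀ ∇V(x)`. -/
noncomputable def wPol {n q : ℕ}
    (k : EuclideanSpace ℝ (Fin n) → Matrix (Fin n) (Fin q) ℝ)
    (γ : ℝ)
    (V : EuclideanSpace ℝ (Fin n) → ℝ)
    (x : EuclideanSpace ℝ (Fin n)) : EuclideanSpace ℝ (Fin q) :=
  (1/(2*γ^2)) • mv (k x)ᵀ (gradient V x)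

/-- The Hamiltonian `H_V(x,u,w)`. -/
noncomputable def Ham {n m q p : ℕ}
    (f : EuclideanSpace ℝ (Fin n) → EuclideanSpace ℝ (Fin n))
    (g : EuclideanSpace ℝ (Fin n) → Matrix (Fin n) (Fin m) ℝ)
    (k : EuclideanSpace ℝ (Fin n) → Matrix (Fin n) (Fin q) ℝ)
    (h : EuclideanSpace ℝ (Fin n) → EuclideanSpace ℝ (Fin p))
    (R : Matrix (Fin m) (Fin m) ℝ) (γ : ℝ)
    (V : EuclideanSpace ℝ (Fin n) → ℝ)
    (x : EuclideanSpace ℝ (Fin n))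
    (u : EuclideanSpace ℝ (Fin m)) (w : EuclideanSpace ℝ (Fin q)) : ℝ :=
  (inner ℝ (gradient V x) (f x + mv (g x) u + mv (k x) w) : ℝ)
    + ‖h x‖^2 + (inner ℝ u (mv R u) : ℝ) - γ^2 * ‖w‖^2

/-- `V` satisfies the HJI equation at `x`. -/
def HJIAt {n m q p : ℕ}
    (f : EuclideanSpace ℝ (Fin n) → EuclideanSpace ℝ (Fin n))
    (g : EuclideanSpace ℝ (Fin n) → Matrix (Fin n) (Fin m) ℝ)
    (k : EuclideanSpace ℝ (Fin n) → Matrix (Fin n) (Fin q) ℝ)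
    (h : EuclideanSpace ℝ (Fin n) → EuclideanSpace ℝ (Fin p))
    (R : Matrix (Fin m) (Fin m) ℝ) (γ : ℝ)
    (V : EuclideanSpace ℝ (Fin n) → ℝ)
    (x : EuclideanSpace ℝ (Fin n)) : Prop :=
  (inner ℝ (gradient V x) (f x) : ℝ) + ‖h x‖^2
    - (1/4) * (inner ℝ (mv (g x)ᵀ (gradient V x)) (mv R⁻¹ (mv (g x)ᵀ (gradient V x))) : ℝ)
    + (1/(4*γ^2)) * ‖mv (k x)ᵀ (gradient V x)‖^2 = 0

open MeasureTheory

lemma inner_mv {a b : ℕ} (M : Matrix (Fin a) (Fin b) ℝ) (v : EuclideanSpace ℝ (Fin a))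
    (u : EuclideanSpace ℝ (Fin b)) :
    (inner ℝ v (mv M u) : ℝ) = (inner ℝ (mv Mᵀ v) u : ℝ) := by
  simp only [mv, PiLp.inner_apply, RCLike.inner_apply, conj_trivial,
    Matrix.mulVec, dotProduct, Matrix.transpose_apply]
  simp_rw [Finset.mul_sum, Finset.sum_mul]
  rw [Finset.sum_comm]
  exact Finset.sum_congr rfl fun i _ => Finset.sum_congr rfl fun j _ => by ring

lemma mv_smul {a b : ℕ} (M : Matrix (Fin a) (Fin b) ℝ) (c : ℝ) (v : EuclideanSpace ℝ (Fin b)) :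
    mv M (c • v) = c • mv M v := by
  ext i
  simp [mv, Matrix.mulVec, dotProduct, PiLp.smul_apply, Finset.mul_sum]
  exact Finset.sum_congr rfl fun j _ => by ring

lemma mv_mv {a b c : ℕ} (M : Matrix (Fin a) (Fin b) ℝ) (N : Matrix (Fin b) (Fin c) ℝ)
    (v : EuclideanSpace ℝ (Fin c)) : mv M (mv N v) = mv (M * N) v := by
  simp [mv, Matrix.mulVec_mulVec]

lemma mv_one {a : ℕ} (v : EuclideanSpace ℝ (Fin a)) : mv (1 : Matrix (Fin a) (Fin a) ℝ) v = v := by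
  simp [mv]

lemma continuous_mv {a b : ℕ} {α : Type*} [TopologicalSpace α]
    {M : α → Matrix (Fin a) (Fin b) ℝ} {v : α → EuclideanSpace ℝ (Fin b)}
    (hM : Continuous M) (hv : Continuous v) : Continuous fun s => mv (M s) (v s) := by
  have h1 : Continuous fun s => (fun i => ∑ j, M s i j * v s j : Fin a → ℝ) :=
    continuous_pi fun i => continuous_finset_sum _ fun j _ =>
      (((continuous_apply j).comp ((continuous_apply i).comp hM))).mul
        ((continuous_apply j).comp ((PiLp.continuous_ofLp 2 fun _ => ℝ).comp hv))
  have h2 := (PiLp.continuous_toLp 2 fun _ => ℝ).comp h1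
  exact h2

lemma continuousOn_mv {a b : ℕ} {α : Type*} [TopologicalSpace α] {s : Set α}
    {M : α → Matrix (Fin a) (Fin b) ℝ} {v : α → EuclideanSpace ℝ (Fin b)}
    (hM : ContinuousOn M s) (hv : ContinuousOn v s) :
    ContinuousOn (fun t => mv (M t) (v t)) s := by
  have hΦ : Continuous fun pr : Matrix (Fin a) (Fin b) ℝ × EuclideanSpace ℝ (Fin b) =>
      mv pr.1 pr.2 := continuous_mv continuous_fst continuous_snd
  exact hΦ.comp_continuousOn (hM.prodMk hv)

lemma key_ineq {n m q p : ℕ}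
    (f : EuclideanSpace ℝ (Fin n) → EuclideanSpace ℝ (Fin n))
    (g : EuclideanSpace ℝ (Fin n) → Matrix (Fin n) (Fin m) ℝ)
    (k : EuclideanSpace ℝ (Fin n) → Matrix (Fin n) (Fin q) ℝ)
    (h : EuclideanSpace ℝ (Fin n) → EuclideanSpace ℝ (Fin p))
    (R : Matrix (Fin m) (Fin m) ℝ) (hR : R.PosDef)
    (γ : ℝ) (hγ : 0 < γ)
    (V : EuclideanSpace ℝ (Fin n) → ℝ)
    (y : EuclideanSpace ℝ (Fin n)) (hy : HJIAt f g k h R γ V y)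
    (ω : EuclideanSpace ℝ (Fin q)) :
    (inner ℝ (gradient V y) (f y + mv (g y) (uPol g R V y) + mv (k y) ω) : ℝ)
      + (‖h y‖^2 + (inner ℝ (uPol g R V y) (mv R (uPol g R V y)) : ℝ)) ≤ γ^2 * ‖ω‖^2 := by
  have hu : uPol g R V y = (-(1/2:ℝ)) • mv R⁻¹ (mv (g y)ᵀ (gradient V y)) := rfl
  set G := gradient V y with hG
  set a := mv (g y)ᵀ G with ha
  set b := mv (k y)ᵀ G with hb
  have hRinv : R * R⁻¹ = 1 := mul_nonsing_inv R ((Matrix.isUnit_iff_isUnit_det R).1 hR.isUnit)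
  have h1 : (inner ℝ G (mv (g y) (uPol g R V y)) : ℝ) = -(1/2) * (inner ℝ a (mv R⁻¹ a) : ℝ) := by
    rw [inner_mv, ← ha, hu, real_inner_smul_right]
  have h2 : (inner ℝ G (mv (k y) ω) : ℝ) = (inner ℝ b ω : ℝ) := by rw [inner_mv, ← hb]
  have h3 : (inner ℝ (uPol g R V y) (mv R (uPol g R V y)) : ℝ)
      = (1/4) * (inner ℝ a (mv R⁻¹ a) : ℝ) := by
    rw [hu, mv_smul, real_inner_smul_left, real_inner_smul_right,
      mv_mv R R⁻¹ a, hRinv, mv_one, real_inner_comm]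
    ring
  unfold HJIAt at hy
  rw [← hG, ← ha, ← hb] at hy
  have h5 : (inner ℝ b ω : ℝ) ≤ γ^2*‖ω‖^2 + 1/(4*γ^2)*‖b‖^2 := by
    have hp : (0:ℝ) < 4*γ^2 := by positivity
    rw [one_div, inv_mul_eq_div, ← sub_le_iff_le_add', le_div_iff₀ hp]
    have h6 := mul_le_mul_of_nonneg_left (real_inner_le_norm b ω) hp.le
    nlinarith [sq_nonneg (2*γ^2*‖ω‖ - ‖b‖)]
  rw [inner_add_right, inner_add_right, h1, h2, h3]
  linarith [hy, h5]


/-- **Finite-horizon L₂-gain bound (part of Lemma 1).**  If `V` is continuously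
differentiable, nonnegative on `X`, and satisfies the HJI equation on `X`, the data are
continuous, and `x` solves the closed-loop dynamics on `[0,T]` inside `X` with `V(x 0) = 0`,
then `∫₀ᵀ (‖h(x t)‖² + ⟨u_V(x t), R u_V(x t)⟩) dt ≤ γ² ∫₀ᵀ ‖w t‖² dt`. -/
theorem finite_horizon_l2_gain {n m q p : ℕ}
    (f : EuclideanSpace ℝ (Fin n) → EuclideanSpace ℝ (Fin n))
    (g : EuclideanSpace ℝ (Fin n) → Matrix (Fin n) (Fin m) ℝ)
    (k : EuclideanSpace ℝ (Fin n) → Matrix (Fin n) (Fin q) ℝ)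
    (h : EuclideanSpace ℝ (Fin n) → EuclideanSpace ℝ (Fin p))
    (R : Matrix (Fin m) (Fin m) ℝ) (hR : R.PosDef)
    (γ : ℝ) (hγ : 0 < γ)
    (X : Set (EuclideanSpace ℝ (Fin n)))
    (V : EuclideanSpace ℝ (Fin n) → ℝ)
    (hV : ContDiff ℝ 1 V)
    (hVnonneg : ∀ y ∈ X, 0 ≤ V y)
    (hHJI : ∀ y ∈ X, HJIAt f g k h R γ V y)
    (hf : Continuous f) (hg : Continuous g) (hk : Continuous k) (hh : Continuous h)
    (T : ℝ) (hT : 0 < T)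
    (w : ℝ → EuclideanSpace ℝ (Fin q)) (hw : Continuous w)
    (x : ℝ → EuclideanSpace ℝ (Fin n))
    (hxX : ∀ t ∈ Set.Icc (0:ℝ) T, x t ∈ X)
    (hx : ∀ t ∈ Set.Icc (0:ℝ) T, HasDerivAt x
      (f (x t) + mv (g (x t)) (uPol g R V (x t)) + mv (k (x t)) (w t)) t)
    (hx0 : V (x 0) = 0) :
    ∫ t in (0:ℝ)..T,
        (‖h (x t)‖^2 + (inner ℝ (uPol g R V (x t)) (mv R (uPol g R V (x t))) : ℝ))
      ≤ γ^2 * ∫ t in (0:ℝ)..T, ‖w t‖^2 := by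
  have hVd : Differentiable ℝ V := hV.differentiable one_ne_zero
  have hgc : Continuous (gradient V) := by
    have : Continuous fun y => (InnerProductSpace.toDual ℝ
        (EuclideanSpace ℝ (Fin n))).symm (fderiv ℝ V y) :=
      (LinearIsometryEquiv.continuous _).comp (hV.continuous_fderiv one_ne_zero)
    exact this
  have hupc : Continuous fun y => uPol g R V y := by
    unfold uPol
    exact (continuous_const : Continuous fun _ : EuclideanSpace ℝ (Fin n) => (-(1/2:ℝ))).smul (continuous_mv continuous_const
      (continuous_mv hg.matrix_transpose hgc))
  have hxc : ContinuousOn x (Set.Icc (0:ℝ) T) :=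
    fun t ht => ((hx t ht).continuousAt).continuousWithinAt
  set D : ℝ → ℝ := fun t => (inner ℝ (gradient V (x t))
    (f (x t) + mv (g (x t)) (uPol g R V (x t)) + mv (k (x t)) (w t)) : ℝ) with hD
  have hBc : ContinuousOn (fun t => f (x t) + mv (g (x t)) (uPol g R V (x t))
      + mv (k (x t)) (w t)) (Set.Icc (0:ℝ) T) := by
    refine ContinuousOn.add (ContinuousOn.add (hf.comp_continuousOn hxc) ?_) ?_
    · exact (continuous_mv hg hupc).comp_continuousOn hxc
    · exact continuousOn_mv ((hk.comp_continuousOn hxc)) hw.continuousOn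
  have hDc : ContinuousOn D (Set.Icc (0:ℝ) T) :=
    ContinuousOn.inner ((hgc.comp_continuousOn hxc)) hBc
  have hcostc : ContinuousOn (fun t => ‖h (x t)‖^2
      + (inner ℝ (uPol g R V (x t)) (mv R (uPol g R V (x t))) : ℝ)) (Set.Icc (0:ℝ) T) := by
    refine ContinuousOn.add (((hh.comp_continuousOn hxc).norm).pow 2) ?_
    exact ContinuousOn.inner (hupc.comp_continuousOn hxc)
      ((continuous_mv continuous_const hupc).comp_continuousOn hxc)
  have huIcc : Set.uIcc (0:ℝ) T = Set.Icc (0:ℝ) T := Set.uIcc_of_le hT.le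
  have hderiv : ∀ t ∈ Set.uIcc (0:ℝ) T, HasDerivAt (fun s => V (x s)) (D t) t := by
    rw [huIcc]; intro t ht
    have h1 : HasDerivAt (fun s => V (x s)) _ t := ((hVd (x t)).hasGradientAt.hasFDerivAt).comp_hasDerivAt t (hx t ht)
    simpa [hD, InnerProductSpace.toDual_apply_apply] using h1
  have hID : IntervalIntegrable D volume 0 T :=
    (huIcc ▸ hDc).intervalIntegrable
  have hIcost : IntervalIntegrable (fun t => ‖h (x t)‖^2
      + (inner ℝ (uPol g R V (x t)) (mv R (uPol g R V (x t))) : ℝ)) volume 0 T :=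
    (huIcc ▸ hcostc).intervalIntegrable
  have hIw : IntervalIntegrable (fun t => γ^2 * ‖w t‖^2) volume 0 T :=
    (continuous_const.mul ((hw.norm).pow 2)).intervalIntegrable _ _
  have hFTC : ∫ t in (0:ℝ)..T, D t = V (x T) - V (x 0) :=
    intervalIntegral.integral_eq_sub_of_hasDerivAt hderiv hID
  have hmono : ∫ t in (0:ℝ)..T, (‖h (x t)‖^2
      + (inner ℝ (uPol g R V (x t)) (mv R (uPol g R V (x t))) : ℝ))
      ≤ ∫ t in (0:ℝ)..T, (γ^2 * ‖w t‖^2 - D t) := by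
    refine intervalIntegral.integral_mono_on hT.le hIcost (hIw.sub hID) ?_
    intro t ht
    have hk2 := key_ineq f g k h R hR γ hγ V (x t) (hHJI (x t) (hxX t ht)) (w t)
    simp only [hD]
    linarith
  rw [intervalIntegral.integral_sub hIw hID, hFTC,
    intervalIntegral.integral_const_mul] at hmono
  have hVT : 0 ≤ V (x T) := hVnonneg _ (hxX T ⟨hT.le, le_rfl⟩)
  linarith
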